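/- arXiv:2110.15123 — 2 statements merged into one kernel-verified Lean document; each statement's English description precedes it below -/
import Mathlib

section
/- A number n = (a, b, c, d) (as a 4-digit string) with a + d = 10, b + c = 8, and a ≥ b + 1 is in the image of the 4-digit Kaprekar map K; specifically, any m with parameters (α, β) = (a, b+1) satisfies K(m) = n. -/
/-- The decimal digits of `n` (little-endian), padded with zeros to length `w`. -/
def padDigits (w n : ℕ) : List ℕ := (Nat.digits 10 n ++ List.replicate w 0).take w

/-- The padded digits of `n` sorted ascending (little-endian), so that
`Nat.ofDigits 10 (sortedDigits w n)` is the descending arrangement `X` and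
`Nat.ofDigits 10 (sortedDigits w n).reverse` is the ascending arrangement `Y`. -/
def sortedDigits (w n : ℕ) : List ℕ := (padDigits w n).mergeSort (· ≤ ·)

/-- The Kaprekar map on `w`-digit numbers: descending arrangement minus ascending arrangement. -/
def kap (w n : ℕ) : ℕ :=
  Nat.ofDigits 10 (sortedDigits w n) - Nat.ofDigits 10 (sortedDigits w n).reverse

/-- All `w` (padded) digits of `n` are equal. -/
def allEqDigits (w n : ℕ) : Prop := ∃ d, padDigits w n = List.replicate w d

lemma sd_len (m : ℕ) : (sortedDigits 4 m).length = 4 := by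
  simp [sortedDigits, padDigits, List.length_mergeSort]

lemma sd_sorted (m : ℕ) : (sortedDigits 4 m).Pairwise (· ≤ ·) :=
  List.pairwise_mergeSort' _ _

theorem stmt9 (a b c d m : ℕ)
    (ha : a ≤ 9) (hb : b ≤ 9) (hc : c ≤ 9) (hd : d ≤ 9)
    (h1 : a + d = 10) (h2 : b + c = 8) (h3 : b + 1 ≤ a)
    (hm0 : 0 < m) (hm1 : m < 10000) (hm2 : ¬ allEqDigits 4 m)
    (hα : (sortedDigits 4 m).getD 3 0 - (sortedDigits 4 m).getD 0 0 = a)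
    (hβ : (sortedDigits 4 m).getD 2 0 - (sortedDigits 4 m).getD 1 0 = b + 1) :
    kap 4 m = 1000 * a + 100 * b + 10 * c + d := by
  have hl := sd_len m
  have hs := sd_sorted m
  unfold kap
  match hL : sortedDigits 4 m, hl with
  | [e0, e1, e2, e3], _ =>
    rw [hL] at hα hβ hs
    simp [List.pairwise_cons] at hs
    simp [Nat.ofDigits] at hα hβ ⊢
    omega
end

section
/- A 4-digit number n = (a, b, c, d) with digits not all equal lies in the image of the 4-digit Kaprekar map if and only if either (a + d = 10, b + c = 8, and a ≥ b + 1) or (a + d = 9, b = c = 9, and a ≤ 8). -/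
set_option maxRecDepth 10000
set_option maxHeartbeats 4000000

lemma merge_eq_insertion (l : List ℕ) : l.mergeSort (· ≤ ·) = l.insertionSort (· ≤ ·) := by
  apply List.Perm.eq_of_pairwise' (r := (· ≤ · : ℕ → ℕ → Prop)) ?_ ?_
    ((l.mergeSort_perm (· ≤ ·)).trans (l.perm_insertionSort (· ≤ ·)).symm)
  · have := List.pairwise_mergeSort' (α := ℕ) (· ≤ ·) l
    simpa using this
  · exact List.pairwise_insertionSort _ l

lemma take_append_replicate (l : List ℕ) (w k k' : ℕ) (h : w ≤ k) (h' : w ≤ k') :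
    (l ++ List.replicate k 0).take w = (l ++ List.replicate k' 0).take w := by
  induction l generalizing w with
  | nil => simp [List.take_replicate, Nat.min_eq_left h, Nat.min_eq_left h']
  | cons x l ih =>
    cases w with
    | zero => simp
    | succ w => simp [List.take_succ_cons, ih w (by omega) (by omega)]

lemma pad_succ (w n : ℕ) : padDigits (w+1) n = n % 10 :: padDigits w (n/10) := by
  rcases Nat.eq_zero_or_pos n with rfl | hn
  · simp [padDigits, List.take_replicate, List.replicate_succ]
  · unfold padDigits
    rw [Nat.digits_def' (by norm_num : 1 < 10) hn]
    rw [List.cons_append, List.take_succ_cons]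
    rw [take_append_replicate _ w (w+1) w (by omega) (by omega)]

lemma pad4 (n : ℕ) : padDigits 4 n = [n % 10, n/10 % 10, n/100 % 10, n/1000 % 10] := by
  rw [show (4:ℕ) = 3+1 from rfl, pad_succ, show (3:ℕ) = 2+1 from rfl, pad_succ,
    show (2:ℕ) = 1+1 from rfl, pad_succ, show (1:ℕ) = 0+1 from rfl, pad_succ]
  have h0 : ∀ m : ℕ, padDigits 0 m = [] := by intro m; simp [padDigits]
  rw [h0]
  norm_num [Nat.div_div_eq_div_mul]

/-- Kernel-computable version of the Kaprekar map on a digit list. -/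
def kapD (l : List ℕ) : ℕ :=
  Nat.ofDigits 10 (l.insertionSort (· ≤ ·)) - Nat.ofDigits 10 (l.insertionSort (· ≤ ·)).reverse

lemma kap_eq (n : ℕ) : kap 4 n = kapD [n % 10, n/10 % 10, n/100 % 10, n/1000 % 10] := by
  simp [kap, kapD, sortedDigits, merge_eq_insertion, pad4]

lemma allEq_iff (m : ℕ) : allEqDigits 4 m ↔
    (m % 10 = m/10 % 10 ∧ m/10 % 10 = m/100 % 10 ∧ m/100 % 10 = m/1000 % 10) := by
  constructor
  · rintro ⟨d0, h⟩
    rw [pad4] at h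
    simp only [List.replicate_succ, List.replicate_zero, List.cons.injEq, and_true,
      true_and, eq_self_iff_true] at h
    omega
  · rintro ⟨h1, h2, h3⟩
    refine ⟨m % 10, ?_⟩
    rw [pad4]
    simp only [List.replicate_succ, List.replicate_zero, List.cons.injEq, and_true,
      true_and, eq_self_iff_true]
    omega

def good (v : ℕ) : Bool :=
  ((v/1000 + v % 10 == 10) && (v/100 % 10 + v/10 % 10 == 8) && (v/100 % 10 + 1 ≤ v/1000)) ||
  ((v/1000 + v % 10 == 9) && (v/100 % 10 == 9) && (v/10 % 10 == 9) && (v/1000 ≤ 8))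

lemma lemF : ∀ h < 100, ∀ l < 100, ¬(l % 10 = l/10 ∧ l/10 = h % 10 ∧ h % 10 = h/10) →
    good (kapD [l % 10, l/10, h % 10, h/10]) = true := by decide

lemma kapB1 : ∀ b a : ℕ, b + 1 ≤ a → a ≤ 9 → kapD [0, 0, b+1, a] = 999*a + 90*b + 90 := by
  intro b a h1 h2
  have hb : b ≤ 8 := by omega
  interval_cases b <;> interval_cases a <;> decide

lemma kapB2 : ∀ a : ℕ, a ≤ 8 → kapD [0, 0, 0, a+1] = 999*(a+1) := by
  intro a h
  interval_cases a <;> decide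

theorem stmt12 (a b c d : ℕ)
    (ha : a ≤ 9) (hb : b ≤ 9) (hc : c ≤ 9) (hd : d ≤ 9)
    (hne : ¬ (a = b ∧ b = c ∧ c = d)) :
    (∃ m : ℕ, 0 < m ∧ m < 10000 ∧ ¬ allEqDigits 4 m ∧
        kap 4 m = 1000 * a + 100 * b + 10 * c + d) ↔
      ((a + d = 10 ∧ b + c = 8 ∧ b + 1 ≤ a) ∨
       (a + d = 9 ∧ b = 9 ∧ c = 9 ∧ a ≤ 8)) := by
  constructor
  · rintro ⟨m, hm0, hmlt, hne', hkap⟩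
    rw [kap_eq] at hkap
    rw [allEq_iff] at hne'
    have c1 : m % 100 % 10 = m % 10 := by omega
    have c2 : m % 100 / 10 = m / 10 % 10 := by omega
    have c3 : m / 100 / 10 = m / 1000 % 10 := by omega
    have hstep := lemF (m/100) (by omega) (m % 100) (by omega)
      (by rw [c1, c2, c3]; exact hne')
    rw [c1, c2, c3, hkap] at hstep
    simp only [good, Bool.or_eq_true, Bool.and_eq_true, beq_iff_eq,
      decide_eq_true_eq] at hstep
    have g1 : (1000 * a + 100 * b + 10 * c + d) / 1000 = a := by omega
    have g2 : (1000 * a + 100 * b + 10 * c + d) / 100 % 10 = b := by omega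
    have g3 : (1000 * a + 100 * b + 10 * c + d) / 10 % 10 = c := by omega
    have g4 : (1000 * a + 100 * b + 10 * c + d) % 10 = d := by omega
    rw [g1, g2, g3, g4] at hstep
    omega
  · rintro (⟨h1, h2, h3⟩ | ⟨h1, h2, h3, h4⟩)
    · refine ⟨1000*a + 100*(b+1), by omega, by omega, ?_, ?_⟩
      · rw [allEq_iff]
        omega
      · rw [kap_eq]
        have hlist : [(1000*a + 100*(b+1)) % 10, (1000*a + 100*(b+1))/10 % 10,
            (1000*a + 100*(b+1))/100 % 10, (1000*a + 100*(b+1))/1000 % 10]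
            = [0, 0, b+1, a] := by
          have e1 : (1000*a + 100*(b+1)) % 10 = 0 := by omega
          have e2 : (1000*a + 100*(b+1))/10 % 10 = 0 := by omega
          have e3 : (1000*a + 100*(b+1))/100 % 10 = b+1 := by omega
          have e4 : (1000*a + 100*(b+1))/1000 % 10 = a := by omega
          rw [e1, e2, e3, e4]
        rw [hlist, kapB1 b a h3 ha]
        omega
    · refine ⟨1000*(a+1), by omega, by omega, ?_, ?_⟩
      · rw [allEq_iff]
        omega
      · rw [kap_eq]
        have hlist : [(1000*(a+1)) % 10, (1000*(a+1))/10 % 10,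
            (1000*(a+1))/100 % 10, (1000*(a+1))/1000 % 10] = [0, 0, 0, a+1] := by
          have e1 : (1000*(a+1)) % 10 = 0 := by omega
          have e2 : (1000*(a+1))/10 % 10 = 0 := by omega
          have e3 : (1000*(a+1))/100 % 10 = 0 := by omega
          have e4 : (1000*(a+1))/1000 % 10 = a+1 := by omega
          rw [e1, e2, e3, e4]
        rw [hlist, kapB2 a h4]
        omega
end
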